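/- Let $0 \leq b_1, b_2 \leq q-2$. The code obtained by evaluating all polynomials $f \in \mathbb{F}_q[t_1, t_2]$ with $\deg_{t_1} f \leq b_1$ and $\deg_{t_2} f \leq b_2$ at all points of $(\mathbb{F}_q^\ast)^2$ has length $(q-1)^2$, dimension $(b_1+1)(b_2+1)$, and minimum distance exactly $(q-1-b_1)(q-1-b_2)$. -/

import Mathlib

open Polynomial Finset

lemma onevar_count {F : Type*} [Field F] [Fintype F] [DecidableEq F]
    (p : Polynomial F) (hp : p ≠ 0) {b : ℕ} (hd : p.natDegree ≤ b) :
    Fintype.card F - 1 - b ≤ (Finset.univ.filter fun a : Fˣ => p.eval (a : F) ≠ 0).card := by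
  classical
  have hzero : (Finset.univ.filter fun a : Fˣ => p.eval (a : F) = 0).card ≤ b := by
    have hinj : Set.InjOn (fun a : Fˣ => (a : F))
        ↑(Finset.univ.filter fun a : Fˣ => p.eval (a : F) = 0) := by
      intro x _ y _ h; exact Units.ext h
    calc (Finset.univ.filter fun a : Fˣ => p.eval (a : F) = 0).card
        = ((Finset.univ.filter fun a : Fˣ => p.eval (a : F) = 0).image
            (fun a : Fˣ => (a : F))).card := (Finset.card_image_of_injOn hinj).symm
      _ ≤ p.roots.toFinset.card := by
          apply Finset.card_le_card
          intro x hx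
          simp only [Finset.mem_image, Finset.mem_filter] at hx
          obtain ⟨a, ⟨_, ha⟩, rfl⟩ := hx
          simp [Multiset.mem_toFinset, Polynomial.mem_roots hp, ha]
      _ ≤ Multiset.card p.roots := p.roots.toFinset_card_le
      _ ≤ p.natDegree := p.card_roots'
      _ ≤ b := hd
  have hsplit := Finset.card_filter_add_card_filter_not
    (s := (Finset.univ : Finset Fˣ)) (p := fun a : Fˣ => p.eval (a : F) = 0)
  have hcard : Fintype.card Fˣ = Fintype.card F - 1 := Fintype.card_units (α := F)
  have huniv : (Finset.univ : Finset Fˣ).card = Fintype.card F - 1 := by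
    rw [Finset.card_univ, hcard]
  have : (Finset.univ.filter fun a : Fˣ => ¬ p.eval (a : F) = 0)
      = (Finset.univ.filter fun a : Fˣ => p.eval (a : F) ≠ 0) := rfl
  rw [this] at hsplit
  omega

open MvPolynomial in
noncomputable def Tmv {F : Type*} [CommSemiring F] : MvPolynomial (Fin 2) F →+* Polynomial (Polynomial F) :=
  MvPolynomial.eval₂Hom (Polynomial.C.comp Polynomial.C) ![Polynomial.C Polynomial.X, Polynomial.X]

lemma fin2_finsupp_eq_iff (d : Fin 2 →₀ ℕ) (i j : ℕ) :
    d = Finsupp.single 0 i + Finsupp.single 1 j ↔ d 0 = i ∧ d 1 = j := by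
  constructor
  · rintro rfl
    simp [Finsupp.single_apply]
  · rintro ⟨h0, h1⟩
    ext a
    match a with
    | 0 => simp [Finsupp.single_apply, h0]
    | 1 => simp [Finsupp.single_apply, h1]

lemma Tmv_monomial {F : Type*} [CommSemiring F] (d : Fin 2 →₀ ℕ) (c : F) :
    Tmv (MvPolynomial.monomial d c)
      = Polynomial.C (Polynomial.C c * Polynomial.X ^ d 0) * Polynomial.X ^ d 1 := by
  rw [Tmv, MvPolynomial.eval₂Hom_monomial]
  rw [Finsupp.prod_fintype _ _ (by intro i; simp)]
  rw [Fin.prod_univ_two]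
  show Polynomial.C (Polynomial.C c) * (Polynomial.C Polynomial.X ^ d 0 * Polynomial.X ^ d 1) = _
  rw [← Polynomial.C_pow, ← mul_assoc, ← map_mul]

lemma Tmv_coeff {F : Type*} [CommSemiring F] (f : MvPolynomial (Fin 2) F) (i j : ℕ) :
    ((Tmv f).coeff j).coeff i
      = MvPolynomial.coeff (Finsupp.single 0 i + Finsupp.single 1 j) f := by
  induction f using MvPolynomial.induction_on' with
  | monomial d c =>
    rw [Tmv_monomial, MvPolynomial.coeff_monomial]
    rw [Polynomial.coeff_C_mul, Polynomial.coeff_X_pow]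
    by_cases h1 : j = d 1
    · rw [if_pos h1, mul_one, Polynomial.coeff_C_mul, Polynomial.coeff_X_pow]
      by_cases h0 : i = d 0
      · rw [if_pos h0, mul_one,
          if_pos ((fin2_finsupp_eq_iff d i j).mpr ⟨h0.symm, h1.symm⟩)]
      · rw [if_neg h0, mul_zero,
          if_neg (fun h => h0 (((fin2_finsupp_eq_iff d i j).mp h).1.symm))]
    · rw [if_neg h1, mul_zero, Polynomial.coeff_zero,
        if_neg (fun h => h1 (((fin2_finsupp_eq_iff d i j).mp h).2.symm))]
  | add p q hp hq =>
    simp [map_add, Polynomial.coeff_add, hp, hq, MvPolynomial.coeff_add]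

lemma Tmv_ne_zero {F : Type*} [CommSemiring F] {f : MvPolynomial (Fin 2) F} (hf : f ≠ 0) :
    Tmv f ≠ 0 := by
  intro h
  apply hf
  ext d
  have hd : d = Finsupp.single 0 (d 0) + Finsupp.single 1 (d 1) :=
    (fin2_finsupp_eq_iff d (d 0) (d 1)).mpr ⟨rfl, rfl⟩
  rw [MvPolynomial.coeff_zero, hd, ← Tmv_coeff, h]
  simp

lemma Tmv_natDegree_le {F : Type*} [CommSemiring F] (f : MvPolynomial (Fin 2) F) :
    (Tmv f).natDegree ≤ MvPolynomial.degreeOf 1 f := by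
  rw [Polynomial.natDegree_le_iff_coeff_eq_zero]
  intro j hj
  ext i
  rw [Tmv_coeff, Polynomial.coeff_zero]
  by_contra hne
  have hmem : (Finsupp.single 0 i + Finsupp.single 1 j : Fin 2 →₀ ℕ) ∈ f.support :=
    MvPolynomial.mem_support_iff.mpr hne
  have := (MvPolynomial.degreeOf_le_iff.mp (le_refl (MvPolynomial.degreeOf 1 f))) _ hmem
  simp [Finsupp.single_apply] at this
  omega

lemma Tmv_coeff_natDegree_le {F : Type*} [CommSemiring F] (f : MvPolynomial (Fin 2) F) (j : ℕ) :
    ((Tmv f).coeff j).natDegree ≤ MvPolynomial.degreeOf 0 f := by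
  rw [Polynomial.natDegree_le_iff_coeff_eq_zero]
  intro i hi
  rw [Tmv_coeff]
  by_contra hne
  have hmem : (Finsupp.single 0 i + Finsupp.single 1 j : Fin 2 →₀ ℕ) ∈ f.support :=
    MvPolynomial.mem_support_iff.mpr hne
  have := (MvPolynomial.degreeOf_le_iff.mp (le_refl (MvPolynomial.degreeOf 0 f))) _ hmem
  simp [Finsupp.single_apply] at this
  omega

lemma Tmv_eval {F : Type*} [CommSemiring F] (f : MvPolynomial (Fin 2) F) (v : Fin 2 → F) :
    Polynomial.eval (v 1) ((Tmv f).map (Polynomial.evalRingHom (v 0)))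
      = MvPolynomial.eval v f := by
  induction f using MvPolynomial.induction_on' with
  | monomial d c =>
    rw [Tmv_monomial, MvPolynomial.eval_monomial]
    rw [Finsupp.prod_fintype _ _ (by intro i; simp), Fin.prod_univ_two]
    simp [mul_assoc]
  | add p q hp hq =>
    simp [map_add, hp, hq]

lemma weight_lb {F : Type*} [Field F] [Fintype F] [DecidableEq F] {b₁ b₂ : ℕ}
    (f : MvPolynomial (Fin 2) F) (hf : f ≠ 0)
    (h1 : MvPolynomial.degreeOf 0 f ≤ b₁) (h2 : MvPolynomial.degreeOf 1 f ≤ b₂) :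
    (Fintype.card F - 1 - b₁) * (Fintype.card F - 1 - b₂) ≤
      (Finset.univ.filter fun t : Fin 2 → Fˣ =>
        MvPolynomial.eval (fun i => (t i : F)) f ≠ 0).card := by
  classical
  set P := Tmv f with hP
  have hPne : P ≠ 0 := Tmv_ne_zero hf
  have hlead : P.leadingCoeff ≠ 0 := Polynomial.leadingCoeff_ne_zero.mpr hPne
  have hleaddeg : P.leadingCoeff.natDegree ≤ b₁ :=
    le_trans (Tmv_coeff_natDegree_le f P.natDegree) h1
  set A : Finset Fˣ := Finset.univ.filter fun a : Fˣ => P.leadingCoeff.eval (a : F) ≠ 0 with hA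
  have hAcard : Fintype.card F - 1 - b₁ ≤ A.card := onevar_count _ hlead hleaddeg
  set S : Finset (Fin 2 → Fˣ) := Finset.univ.filter fun t : Fin 2 → Fˣ =>
        MvPolynomial.eval (fun i => (t i : F)) f ≠ 0 with hS
  have key : ∀ a ∈ A, Fintype.card F - 1 - b₂ ≤ (S.filter fun t => t 0 = a).card := by
    intro a ha
    set pa : Polynomial F := P.map (Polynomial.evalRingHom (a : F)) with hpa
    have hpane : pa ≠ 0 := by
      intro h
      have : pa.coeff P.natDegree = P.leadingCoeff.eval (a : F) := by
        rw [hpa, Polynomial.coeff_map]; rfl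
      rw [h, Polynomial.coeff_zero] at this
      exact (Finset.mem_filter.mp ha).2 this.symm
    have hpadeg : pa.natDegree ≤ b₂ :=
      le_trans Polynomial.natDegree_map_le (le_trans (Tmv_natDegree_le f) h2)
    have hB := onevar_count pa hpane hpadeg
    refine le_trans hB (Finset.card_le_card_of_injOn (fun y : Fˣ => ![a, y]) ?_ ?_)
    · intro y hy
      simp only [Finset.mem_coe, Finset.mem_filter, Finset.mem_univ, true_and] at hy
      simp only [hS, Finset.mem_coe, Finset.mem_filter, Finset.mem_univ, true_and]
      refine ⟨?_, rfl⟩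
      rw [← Tmv_eval f (fun i => ((![a, y] : Fin 2 → Fˣ) i : F))]
      exact hy
    · intro y _ z _ h
      have := congrFun h 1
      simpa using this
  have hsum : ∑ a ∈ A, (S.filter fun t => t 0 = a).card ≤ S.card := by
    rw [Finset.card_eq_sum_card_fiberwise (f := fun t : Fin 2 → Fˣ => t 0) (t := Finset.univ)
      (fun t _ => Finset.mem_univ _)]
    exact Finset.sum_le_sum_of_subset (Finset.subset_univ A)
  have hge : A.card * (Fintype.card F - 1 - b₂) ≤ ∑ a ∈ A, (S.filter fun t => t 0 = a).card := by
    rw [← smul_eq_mul]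
    exact Finset.card_nsmul_le_sum A _ _ key
  calc (Fintype.card F - 1 - b₁) * (Fintype.card F - 1 - b₂)
      ≤ A.card * (Fintype.card F - 1 - b₂) := Nat.mul_le_mul_right _ hAcard
    _ ≤ S.card := le_trans hge hsum

lemma degreeOf_prod_le' {F : Type*} [CommRing F] {α : Type*} (i : Fin 2) (s : Finset α)
    (g : α → MvPolynomial (Fin 2) F) :
    MvPolynomial.degreeOf i (∏ a ∈ s, g a) ≤ ∑ a ∈ s, MvPolynomial.degreeOf i (g a) := by
  classical
  induction s using Finset.cons_induction with
  | empty =>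
      rw [Finset.prod_empty, Finset.sum_empty, ← MvPolynomial.C_1, MvPolynomial.degreeOf_C]
  | cons a s ha ih =>
    rw [Finset.prod_cons, Finset.sum_cons]
    exact le_trans (MvPolynomial.degreeOf_mul_le _ _ _) (Nat.add_le_add le_rfl ih)

lemma degreeOf_X_sub_C_le {F : Type*} [CommRing F] [Nontrivial F] (i j : Fin 2) (c : F) :
    MvPolynomial.degreeOf i (MvPolynomial.X j - MvPolynomial.C c) ≤
      if i = j then 1 else 0 := by
  have : MvPolynomial.X j - MvPolynomial.C c
      = MvPolynomial.X (R := F) j + MvPolynomial.C (-c) := by rw [map_neg]; ring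
  rw [this]
  refine le_trans (MvPolynomial.degreeOf_add_le _ _ _) ?_
  rw [MvPolynomial.degreeOf_C, MvPolynomial.degreeOf_X]
  simp

lemma exists_min_weight {F : Type*} [Field F] [Fintype F] [DecidableEq F] {b₁ b₂ : ℕ}
    (hb₁ : b₁ ≤ Fintype.card F - 2) (hb₂ : b₂ ≤ Fintype.card F - 2) :
    ∃ f : MvPolynomial (Fin 2) F,
      MvPolynomial.degreeOf 0 f ≤ b₁ ∧ MvPolynomial.degreeOf 1 f ≤ b₂ ∧
      (fun t : Fin 2 → Fˣ => MvPolynomial.eval (fun i => (t i : F)) f) ≠ 0 ∧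
      hammingNorm (fun t : Fin 2 → Fˣ => MvPolynomial.eval (fun i => (t i : F)) f)
        = (Fintype.card F - 1 - b₁) * (Fintype.card F - 1 - b₂) := by
  classical
  have hq : 2 ≤ Fintype.card F := Fintype.one_lt_card
  have hcardu : Fintype.card Fˣ = Fintype.card F - 1 := Fintype.card_units (α := F)
  have hb₁' : b₁ ≤ Fintype.card Fˣ := by omega
  have hb₂' : b₂ ≤ Fintype.card Fˣ := by omega
  obtain ⟨A₁, -, hA₁⟩ := Finset.exists_subset_card_eq (s := (Finset.univ : Finset Fˣ)) (n := b₁)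
    (by simpa using hb₁')
  obtain ⟨A₂, -, hA₂⟩ := Finset.exists_subset_card_eq (s := (Finset.univ : Finset Fˣ)) (n := b₂)
    (by simpa using hb₂')
  set f : MvPolynomial (Fin 2) F :=
    (∏ a ∈ A₁, (MvPolynomial.X 0 - MvPolynomial.C (a : F))) *
    (∏ a ∈ A₂, (MvPolynomial.X 1 - MvPolynomial.C (a : F))) with hf
  have hdeg : ∀ i : Fin 2, MvPolynomial.degreeOf i f ≤
      (if i = 0 then b₁ else 0) + (if i = 1 then b₂ else 0) := by
    intro i
    refine le_trans (MvPolynomial.degreeOf_mul_le _ _ _) (Nat.add_le_add ?_ ?_)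
    · refine le_trans (degreeOf_prod_le' i A₁ _) ?_
      refine le_trans (Finset.sum_le_sum fun a _ => degreeOf_X_sub_C_le i 0 (a : F)) ?_
      rw [Finset.sum_const, smul_eq_mul, hA₁]
      split <;> omega
    · refine le_trans (degreeOf_prod_le' i A₂ _) ?_
      refine le_trans (Finset.sum_le_sum fun a _ => degreeOf_X_sub_C_le i 1 (a : F)) ?_
      rw [Finset.sum_const, smul_eq_mul, hA₂]
      split <;> omega
  have heval : ∀ t : Fin 2 → Fˣ, MvPolynomial.eval (fun i => (t i : F)) f
      = (∏ a ∈ A₁, ((t 0 : F) - (a : F))) * (∏ a ∈ A₂, ((t 1 : F) - (a : F))) := by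
    intro t
    simp [hf, map_prod]
  have hval : ∀ t : Fin 2 → Fˣ,
      MvPolynomial.eval (fun i => (t i : F)) f ≠ 0 ↔ (t 0 ∉ A₁ ∧ t 1 ∉ A₂) := by
    intro t
    rw [heval, mul_ne_zero_iff, Finset.prod_ne_zero_iff, Finset.prod_ne_zero_iff]
    constructor
    · rintro ⟨h1, h2⟩
      constructor
      · intro hm
        exact h1 _ hm (by simp)
      · intro hm
        exact h2 _ hm (by simp)
    · rintro ⟨h1, h2⟩
      constructor
      · intro a ha h
        exact h1 ((Units.ext (sub_eq_zero.mp h)) ▸ ha)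
      · intro a ha h
        exact h2 ((Units.ext (sub_eq_zero.mp h)) ▸ ha)
  refine ⟨f, ?_, ?_, ?_, ?_⟩
  · simpa using hdeg 0
  · simpa using hdeg 1
  · have hx : (A₁ᶜ : Finset Fˣ).Nonempty := by
      rw [← Finset.card_pos, Finset.card_compl, hA₁]; omega
    have hy : (A₂ᶜ : Finset Fˣ).Nonempty := by
      rw [← Finset.card_pos, Finset.card_compl, hA₂]; omega
    obtain ⟨x, hx⟩ := hx
    obtain ⟨y, hy⟩ := hy
    rw [Finset.mem_compl] at hx hy
    intro heq
    have := congrFun heq ![x, y]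
    exact ((hval ![x, y]).mpr ⟨hx, hy⟩) this
  · have hham : hammingNorm (fun t : Fin 2 → Fˣ => MvPolynomial.eval (fun i => (t i : F)) f)
        = (Finset.univ.filter fun t : Fin 2 → Fˣ =>
            MvPolynomial.eval (fun i => (t i : F)) f ≠ 0).card := by
      simp [hammingNorm, Finset.filter_congr]
    rw [hham]
    have hfeq : (Finset.univ.filter fun t : Fin 2 → Fˣ =>
            MvPolynomial.eval (fun i => (t i : F)) f ≠ 0)
        = Finset.univ.filter fun t : Fin 2 → Fˣ => t 0 ∉ A₁ ∧ t 1 ∉ A₂ := by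
      apply Finset.filter_congr
      intro t _
      simpa using hval t
    rw [hfeq]
    have hbij : (Finset.univ.filter fun t : Fin 2 → Fˣ => t 0 ∉ A₁ ∧ t 1 ∉ A₂).card
        = ((A₁ᶜ : Finset Fˣ) ×ˢ (A₂ᶜ : Finset Fˣ)).card := by
      apply Finset.card_bij' (fun t _ => (t 0, t 1)) (fun p _ => ![p.1, p.2])
      · intro t ht
        simp only [Finset.mem_filter] at ht
        simp [Finset.mem_product, Finset.mem_compl, ht.2.1, ht.2.2]
      · intro p hp
        simp only [Finset.mem_product, Finset.mem_compl] at hp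
        simp [hp.1, hp.2]
      · intro t _
        funext i
        fin_cases i <;> rfl
      · intro p _
        rfl
    rw [hbij, Finset.card_product, Finset.card_compl, Finset.card_compl, hA₁, hA₂, hcardu]

noncomputable def evL (F : Type*) [Field F] [Fintype F] :
    MvPolynomial (Fin 2) F →ₗ[F] ((Fin 2 → Fˣ) → F) where
  toFun f := fun t => MvPolynomial.eval (fun i => (t i : F)) f
  map_add' p q := by funext t; simp
  map_smul' c p := by funext t; simp [MvPolynomial.smul_eval]

def sSet (b₁ b₂ : ℕ) : Set (Fin 2 →₀ ℕ) := {d | d 0 ≤ b₁ ∧ d 1 ≤ b₂}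

noncomputable def sEquiv (b₁ b₂ : ℕ) : sSet b₁ b₂ ≃ Fin (b₁ + 1) × Fin (b₂ + 1) where
  toFun d := (⟨d.1 0, Nat.lt_succ_of_le d.2.1⟩, ⟨d.1 1, Nat.lt_succ_of_le d.2.2⟩)
  invFun p := ⟨Finsupp.single 0 (p.1 : ℕ) + Finsupp.single 1 (p.2 : ℕ), by
    constructor
    · simp [Finsupp.single_apply]
      exact Nat.lt_succ_iff.mp p.1.isLt
    · simp [Finsupp.single_apply]
      exact Nat.lt_succ_iff.mp p.2.isLt⟩
  left_inv d := by
    apply Subtype.ext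
    exact ((fin2_finsupp_eq_iff d.1 (d.1 0) (d.1 1)).mpr ⟨rfl, rfl⟩).symm
  right_inv p := by
    ext <;> simp [Finsupp.single_apply]

lemma mem_V_iff {F : Type*} [Field F] [Fintype F] [DecidableEq F] (b₁ b₂ : ℕ)
    (f : MvPolynomial (Fin 2) F) :
    f ∈ MvPolynomial.restrictSupport F (sSet b₁ b₂) ↔
      MvPolynomial.degreeOf 0 f ≤ b₁ ∧ MvPolynomial.degreeOf 1 f ≤ b₂ := by
  rw [MvPolynomial.restrictSupport, AddMonoidAlgebra.mem_supported,
    MvPolynomial.degreeOf_le_iff, MvPolynomial.degreeOf_le_iff]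
  constructor
  · intro h
    exact ⟨fun d hd => (h hd).1, fun d hd => (h hd).2⟩
  · intro h d hd
    exact ⟨h.1 d hd, h.2 d hd⟩

theorem rectangle_toric_code_parameters {F : Type*} [Field F] [Fintype F] [DecidableEq F]
    (b₁ b₂ : ℕ) (hb₁ : b₁ ≤ Fintype.card F - 2) (hb₂ : b₂ ≤ Fintype.card F - 2)
    (C : Set ((Fin 2 → Fˣ) → F))
    (hC : C = { c | ∃ f : MvPolynomial (Fin 2) F,
        MvPolynomial.degreeOf 0 f ≤ b₁ ∧ MvPolynomial.degreeOf 1 f ≤ b₂ ∧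
        c = fun t => MvPolynomial.eval (fun i => (t i : F)) f }) :
    Fintype.card (Fin 2 → Fˣ) = (Fintype.card F - 1) ^ 2 ∧
    Module.finrank F (Submodule.span F C) = (b₁ + 1) * (b₂ + 1) ∧
    (∀ c ∈ C, c ≠ 0 →
      (Fintype.card F - 1 - b₁) * (Fintype.card F - 1 - b₂) ≤ hammingNorm c) ∧
    (∃ c ∈ C, c ≠ 0 ∧
      hammingNorm c = (Fintype.card F - 1 - b₁) * (Fintype.card F - 1 - b₂)) := by
  classical
  have hq : 2 ≤ Fintype.card F := Fintype.one_lt_card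
  have hcardu : Fintype.card Fˣ = Fintype.card F - 1 := Fintype.card_units (α := F)
  have hx1 : 1 ≤ Fintype.card F - 1 - b₁ := by omega
  have hx2 : 1 ≤ Fintype.card F - 1 - b₂ := by omega
  -- the lower bound statement, as needed in two places
  have lb : ∀ c ∈ C, c ≠ 0 →
      (Fintype.card F - 1 - b₁) * (Fintype.card F - 1 - b₂) ≤ hammingNorm c := by
    intro c hc hcne
    rw [hC] at hc
    obtain ⟨f, hf1, hf2, rfl⟩ := hc
    have hfne : f ≠ 0 := by
      rintro rfl
      apply hcne
      funext t
      simp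
    have := weight_lb f hfne hf1 hf2
    refine le_trans this ?_
    apply le_of_eq
    simp [hammingNorm, Finset.filter_congr]
  refine ⟨?_, ?_, lb, ?_⟩
  · rw [Fintype.card_fun, hcardu, Fintype.card_fin]
  · -- dimension
    set V := MvPolynomial.restrictSupport F (sSet b₁ b₂) with hV
    have hCset : C = ↑(Submodule.map (evL F) V) := by
      rw [hC]
      ext c
      simp only [Set.mem_setOf_eq, SetLike.mem_coe, Submodule.mem_map]
      constructor
      · rintro ⟨f, h1, h2, rfl⟩
        exact ⟨f, (mem_V_iff b₁ b₂ f).mpr ⟨h1, h2⟩, rfl⟩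
      · rintro ⟨f, hf, rfl⟩
        obtain ⟨h1, h2⟩ := (mem_V_iff b₁ b₂ f).mp hf
        exact ⟨f, h1, h2, rfl⟩
    rw [hCset, Submodule.span_eq]
    -- injectivity on V
    have hinj : Function.Injective ((evL F).comp V.subtype) := by
      rw [← LinearMap.ker_eq_bot, LinearMap.ker_eq_bot']
      rintro ⟨f, hf⟩ hker
      obtain ⟨h1, h2⟩ := (mem_V_iff b₁ b₂ f).mp hf
      have hev : evL F f = 0 := hker
      apply Subtype.ext
      show f = 0
      by_contra hfne
      have hw := weight_lb f hfne h1 h2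
      have hpos : 0 < (Fintype.card F - 1 - b₁) * (Fintype.card F - 1 - b₂) :=
        Nat.mul_pos hx1 hx2
      have : 0 < (Finset.univ.filter fun t : Fin 2 → Fˣ =>
          MvPolynomial.eval (fun i => (t i : F)) f ≠ 0).card := lt_of_lt_of_le hpos hw
      obtain ⟨t, ht⟩ := Finset.card_pos.mp this
      rw [Finset.mem_filter] at ht
      exact ht.2 (congrFun hev t)
    have hrange : LinearMap.range ((evL F).comp V.subtype) = Submodule.map (evL F) V := by
      rw [LinearMap.range_comp, Submodule.range_subtype]
    rw [← hrange]
    rw [← (LinearEquiv.ofInjective _ hinj).finrank_eq]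
    haveI : Fintype (sSet b₁ b₂ : Set (Fin 2 →₀ ℕ)) := Fintype.ofEquiv _ (sEquiv b₁ b₂).symm
    rw [Module.finrank_eq_card_basis (MvPolynomial.basisRestrictSupport F (sSet b₁ b₂))]
    rw [Fintype.card_congr (sEquiv b₁ b₂), Fintype.card_prod, Fintype.card_fin, Fintype.card_fin]
  · -- existence
    obtain ⟨f, h1, h2, hne, hham⟩ := exists_min_weight (F := F) hb₁ hb₂
    exact ⟨_, by rw [hC]; exact ⟨f, h1, h2, rfl⟩, hne, hham⟩
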